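/- arXiv:math/0210181 — 2 statements merged into one kernel-verified Lean document; each statement's English description precedes it below -/
import Mathlib

section
/- Let ξ be real and define L(x) = max(|x0ξ - x1|, |x0ξ² - x2|) for x ∈ ℤ³. Then there is a constant C(ξ) such that for all x, y, z ∈ ℤ³, |det(x,y,z)| ≤ C(ξ)·(‖x‖L(y)L(z) + ‖y‖L(x)L(z) + ‖z‖L(x)L(y)). -/
noncomputable def normT (x : Fin 3 → ℤ) : ℝ :=
  max (|(x 0 : ℝ)|) (max (|(x 1 : ℝ)|) (|(x 2 : ℝ)|))

noncomputable def Lf (ξ : ℝ) (x : Fin 3 → ℤ) : ℝ :=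
  max (|(x 0 : ℝ) * ξ - (x 1 : ℝ)|) (|(x 0 : ℝ) * ξ ^ 2 - (x 2 : ℝ)|)

def det3 (x y z : Fin 3 → ℤ) : ℤ :=
  (!![x 0, x 1, x 2; y 0, y 1, y 2; z 0, z 1, z 2]).det

theorem det_estimate (ξ : ℝ) :
    ∃ C : ℝ, 0 < C ∧ ∀ x y z : Fin 3 → ℤ,
      |(det3 x y z : ℤ)| ≤
        C * (normT x * Lf ξ y * Lf ξ z + normT y * Lf ξ x * Lf ξ z +
             normT z * Lf ξ x * Lf ξ y) := by
  refine ⟨2, by norm_num, fun x y z => ?_⟩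
  have hdet : ((det3 x y z : ℤ) : ℝ) =
      (x 0 : ℝ) * (((y 0 : ℝ) * ξ - y 1) * ((z 0 : ℝ) * ξ ^ 2 - z 2)
        - ((y 0 : ℝ) * ξ ^ 2 - y 2) * ((z 0 : ℝ) * ξ - z 1))
      - (y 0 : ℝ) * (((x 0 : ℝ) * ξ - x 1) * ((z 0 : ℝ) * ξ ^ 2 - z 2)
        - ((x 0 : ℝ) * ξ ^ 2 - x 2) * ((z 0 : ℝ) * ξ - z 1))
      + (z 0 : ℝ) * (((x 0 : ℝ) * ξ - x 1) * ((y 0 : ℝ) * ξ ^ 2 - y 2)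
        - ((x 0 : ℝ) * ξ ^ 2 - x 2) * ((y 0 : ℝ) * ξ - y 1)) := by
    rw [det3, Matrix.det_fin_three]
    simp only [Matrix.cons_val', Matrix.cons_val_zero, Matrix.cons_val_one, Matrix.head_cons,
      Matrix.empty_val', Matrix.cons_val_fin_one, Matrix.head_fin_const, Matrix.cons_val_two,
      Matrix.tail_cons, Matrix.of_apply]
    push_cast
    ring
  have key : ∀ (u a b a' b' N P Q : ℝ), |u| ≤ N → |a| ≤ P → |a'| ≤ P →
      |b| ≤ Q → |b'| ≤ Q → |u * (a * b' - a' * b)| ≤ 2 * (N * P * Q) := by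
    intro u a b a' b' N P Q hu ha ha' hb hb'
    have h1 : |u * (a * b' - a' * b)| ≤ |u| * (|a| * |b'| + |a'| * |b|) := by
      rw [abs_mul]
      refine mul_le_mul_of_nonneg_left ?_ (abs_nonneg u)
      calc |a * b' - a' * b| ≤ |a * b'| + |a' * b| := abs_sub _ _
        _ = |a| * |b'| + |a'| * |b| := by rw [abs_mul, abs_mul]
    have hN : (0:ℝ) ≤ N := le_trans (abs_nonneg _) hu
    have hP : (0:ℝ) ≤ P := le_trans (abs_nonneg _) ha
    have hQ : (0:ℝ) ≤ Q := le_trans (abs_nonneg _) hb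
    calc |u * (a * b' - a' * b)| ≤ |u| * (|a| * |b'| + |a'| * |b|) := h1
      _ ≤ N * (P * Q + P * Q) := by
          gcongr
      _ = 2 * (N * P * Q) := by ring
  have hx0 : |(x 0 : ℝ)| ≤ normT x := le_max_left _ _
  have hy0 : |(y 0 : ℝ)| ≤ normT y := le_max_left _ _
  have hz0 : |(z 0 : ℝ)| ≤ normT z := le_max_left _ _
  have hax : |(x 0 : ℝ) * ξ - x 1| ≤ Lf ξ x := le_max_left _ _
  have hbx : |(x 0 : ℝ) * ξ ^ 2 - x 2| ≤ Lf ξ x := le_max_right _ _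
  have hay : |(y 0 : ℝ) * ξ - y 1| ≤ Lf ξ y := le_max_left _ _
  have hby : |(y 0 : ℝ) * ξ ^ 2 - y 2| ≤ Lf ξ y := le_max_right _ _
  have haz : |(z 0 : ℝ) * ξ - z 1| ≤ Lf ξ z := le_max_left _ _
  have hbz : |(z 0 : ℝ) * ξ ^ 2 - z 2| ≤ Lf ξ z := le_max_right _ _
  have t1 := key (x 0 : ℝ) _ _ _ _ (normT x) (Lf ξ y) (Lf ξ z) hx0 hay hby haz hbz
  have t2 := key (y 0 : ℝ) _ _ _ _ (normT y) (Lf ξ x) (Lf ξ z) hy0 hax hbx haz hbz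
  have t3 := key (z 0 : ℝ) _ _ _ _ (normT z) (Lf ξ x) (Lf ξ y) hz0 hax hbx hay hby
  have h := abs_add_le ((x 0 : ℝ) * (((y 0 : ℝ) * ξ - y 1) * ((z 0 : ℝ) * ξ ^ 2 - z 2)
        - ((y 0 : ℝ) * ξ ^ 2 - y 2) * ((z 0 : ℝ) * ξ - z 1))
      - (y 0 : ℝ) * (((x 0 : ℝ) * ξ - x 1) * ((z 0 : ℝ) * ξ ^ 2 - z 2)
        - ((x 0 : ℝ) * ξ ^ 2 - x 2) * ((z 0 : ℝ) * ξ - z 1)))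
      ((z 0 : ℝ) * (((x 0 : ℝ) * ξ - x 1) * ((y 0 : ℝ) * ξ ^ 2 - y 2)
        - ((x 0 : ℝ) * ξ ^ 2 - x 2) * ((y 0 : ℝ) * ξ - y 1)))
  have h2 := abs_sub ((x 0 : ℝ) * (((y 0 : ℝ) * ξ - y 1) * ((z 0 : ℝ) * ξ ^ 2 - z 2)
        - ((y 0 : ℝ) * ξ ^ 2 - y 2) * ((z 0 : ℝ) * ξ - z 1)))
      ((y 0 : ℝ) * (((x 0 : ℝ) * ξ - x 1) * ((z 0 : ℝ) * ξ ^ 2 - z 2)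
        - ((x 0 : ℝ) * ξ ^ 2 - x 2) * ((z 0 : ℝ) * ξ - z 1)))
  rw [show |(det3 x y z : ℤ)| = |((det3 x y z : ℤ) : ℝ)| by push_cast; ring, hdet]
  linarith
end

section
/- Suppose a real number ξ admits sequences (Y_k) of positive integers and (y_k) in ℤ³ with ‖y_k‖ ≍ Y_k, L(y_k) ≤ C·Y_k^{-1} for all k, Y_k → ∞, and 1 ≤ |det(y_k, y_{k+1}, y_{k+2})| for all k. Then ξ is neither rational nor a quadratic irrational, i.e., 1, ξ, ξ² are linearly independent over ℚ. -/
theorem not_quadratic_of_good_sequence (ξ : ℝ)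
    (Y : ℕ → ℕ) (hY1 : ∀ k, 1 ≤ Y k)
    (y : ℕ → Fin 3 → ℤ)
    (c₁ c₂ C : ℝ) (hc₁ : 0 < c₁) (hc₂ : 0 < c₂) (hC : 0 < C)
    (hnorm : ∀ k, c₁ * (Y k : ℝ) ≤ normT (y k) ∧ normT (y k) ≤ c₂ * (Y k : ℝ))
    (hL : ∀ k, Lf ξ (y k) ≤ C / (Y k : ℝ))
    (hYtop : Filter.Tendsto Y Filter.atTop Filter.atTop)
    (hdet : ∀ k, 1 ≤ |det3 (y k) (y (k + 1)) (y (k + 2))|) :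
    ∀ p q r : ℚ, (p : ℝ) + q * ξ + r * ξ ^ 2 = 0 → p = 0 ∧ q = 0 ∧ r = 0 := by
  intro p q r hrel
  by_contra hcon
  -- clear denominators
  set a : ℤ := p.num * q.den * r.den with ha
  set b : ℤ := (p.den : ℤ) * q.num * r.den with hb
  set c : ℤ := (p.den : ℤ) * q.den * r.num with hc
  have hpden : ((p.den : ℝ)) ≠ 0 := by exact_mod_cast p.den_nz
  have hqden : ((q.den : ℝ)) ≠ 0 := by exact_mod_cast q.den_nz
  have hrden : ((r.den : ℝ)) ≠ 0 := by exact_mod_cast r.den_nz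
  have hpnum : ((p.num : ℝ)) = (p : ℝ) * p.den := by
    rw [Rat.cast_def]; field_simp
  have hqnum : ((q.num : ℝ)) = (q : ℝ) * q.den := by
    rw [Rat.cast_def]; field_simp
  have hrnum : ((r.num : ℝ)) = (r : ℝ) * r.den := by
    rw [Rat.cast_def]; field_simp
  have key : (a : ℝ) + b * ξ + c * ξ ^ 2 = 0 := by
    have : (a : ℝ) + b * ξ + c * ξ ^ 2
        = ((p.den : ℝ) * q.den * r.den) * ((p : ℝ) + q * ξ + r * ξ ^ 2) := by
      push_cast [ha, hb, hc, hpnum, hqnum, hrnum]; ring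
    rw [this, hrel, mul_zero]
  -- the coefficient vector is nonzero
  have hvne : ¬(a = 0 ∧ b = 0 ∧ c = 0) := by
    rintro ⟨ha0, hb0, hc0⟩
    apply hcon
    refine ⟨?_, ?_, ?_⟩
    · have := mul_ne_zero (mul_ne_zero (Int.natCast_ne_zero.2 p.den_nz)
        (Int.natCast_ne_zero.2 q.den_nz)) (Int.natCast_ne_zero.2 r.den_nz)
      rcases mul_eq_zero.1 (by rw [← ha]; exact ha0 :
          p.num * q.den * r.den = 0) with h | h
      · rcases mul_eq_zero.1 h with h' | h'
        · exact Rat.num_eq_zero.1 h'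
        · exact absurd h' (Int.natCast_ne_zero.2 q.den_nz)
      · exact absurd h (Int.natCast_ne_zero.2 r.den_nz)
    · rcases mul_eq_zero.1 (hb0 : (p.den : ℤ) * q.num * r.den = 0) with h | h
      · rcases mul_eq_zero.1 h with h' | h'
        · exact absurd h' (Int.natCast_ne_zero.2 p.den_nz)
        · exact Rat.num_eq_zero.1 h'
      · exact absurd h (Int.natCast_ne_zero.2 r.den_nz)
    · rcases mul_eq_zero.1 (hc0 : (p.den : ℤ) * q.den * r.num = 0) with h | h
      · rcases mul_eq_zero.1 h with h' | h'
        · exact absurd h' (Int.natCast_ne_zero.2 p.den_nz)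
        · exact absurd h' (Int.natCast_ne_zero.2 q.den_nz)
      · exact Rat.num_eq_zero.1 h
  -- bound constant
  set B : ℝ := |(b : ℝ)| + |(c : ℝ)| with hB
  have hB0 : 0 ≤ B := by positivity
  -- find K beyond which Y k > B * C
  obtain ⟨K, hK⟩ := (hYtop.eventually_gt_atTop ⌈B * C⌉₊).exists_forall_of_atTop
  -- the linear form vanishes for k ≥ K
  have hform : ∀ k, K ≤ k → a * y k 0 + b * y k 1 + c * y k 2 = 0 := by
    intro k hk
    have hYpos : (0 : ℝ) < (Y k : ℝ) := by
      exact_mod_cast Nat.lt_of_lt_of_le Nat.zero_lt_one (hY1 k)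
    have hYgt : B * C < (Y k : ℝ) := by
      have h1 : B * C ≤ (⌈B * C⌉₊ : ℝ) := Nat.le_ceil _
      have h2 : (⌈B * C⌉₊ : ℝ) < (Y k : ℝ) := by exact_mod_cast hK k hk
      linarith
    have hLk := hL k
    have hL1 : |(y k 0 : ℝ) * ξ - (y k 1 : ℝ)| ≤ C / Y k :=
      le_trans (le_max_left _ _) hLk
    have hL2 : |(y k 0 : ℝ) * ξ ^ 2 - (y k 2 : ℝ)| ≤ C / Y k :=
      le_trans (le_max_right _ _) hLk
    have heq : ((a * y k 0 + b * y k 1 + c * y k 2 : ℤ) : ℝ)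
        = (y k 0 : ℝ) * ((a : ℝ) + b * ξ + c * ξ ^ 2)
          - (b : ℝ) * ((y k 0 : ℝ) * ξ - (y k 1 : ℝ))
          - (c : ℝ) * ((y k 0 : ℝ) * ξ ^ 2 - (y k 2 : ℝ)) := by
      push_cast; ring
    rw [key, mul_zero, zero_sub] at heq
    have habs : |((a * y k 0 + b * y k 1 + c * y k 2 : ℤ) : ℝ)| < 1 := by
      rw [heq]
      have : |-((b : ℝ) * ((y k 0 : ℝ) * ξ - (y k 1 : ℝ)))
          - (c : ℝ) * ((y k 0 : ℝ) * ξ ^ 2 - (y k 2 : ℝ))|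
          ≤ |(b : ℝ)| * |(y k 0 : ℝ) * ξ - (y k 1 : ℝ)|
            + |(c : ℝ)| * |(y k 0 : ℝ) * ξ ^ 2 - (y k 2 : ℝ)| := by
        calc _ ≤ |-((b : ℝ) * ((y k 0 : ℝ) * ξ - (y k 1 : ℝ)))|
              + |(c : ℝ) * ((y k 0 : ℝ) * ξ ^ 2 - (y k 2 : ℝ))| := abs_sub _ _
          _ = _ := by rw [abs_neg, abs_mul, abs_mul]
      have hstep : |(b : ℝ)| * |(y k 0 : ℝ) * ξ - (y k 1 : ℝ)|
            + |(c : ℝ)| * |(y k 0 : ℝ) * ξ ^ 2 - (y k 2 : ℝ)|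
          ≤ B * (C / Y k) := by
        rw [hB, add_mul]
        gcongr <;> positivity
      have hlt : B * (C / Y k) < 1 := by
        rw [mul_div_assoc', div_lt_one hYpos]
        linarith
      linarith
    have : |a * y k 0 + b * y k 1 + c * y k 2| < 1 := by
      exact_mod_cast (by rwa [← Int.cast_abs] at habs :
        ((|a * y k 0 + b * y k 1 + c * y k 2| : ℤ) : ℝ) < 1)
    exact Int.abs_lt_one_iff.1 this
  -- determinant vanishes, contradiction
  have hdet0 : det3 (y K) (y (K + 1)) (y (K + 2)) = 0 := by
    rw [det3]
    rw [← Matrix.exists_mulVec_eq_zero_iff]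
    refine ⟨![a, b, c], ?_, ?_⟩
    · intro h0
      apply hvne
      refine ⟨?_, ?_, ?_⟩
      · have := congrFun h0 0; simpa using this
      · have := congrFun h0 1; simpa using this
      · have := congrFun h0 2; simpa using this
    · funext i
      fin_cases i <;>
        simp [Matrix.mulVec, dotProduct, Fin.sum_univ_three] <;>
        [ (have := hform K le_rfl);
          (have := hform (K + 1) (Nat.le_succ K));
          (have := hform (K + 2) (by omega)) ] <;>
        linarith
  have := hdet K
  rw [hdet0] at this
  simp at this
end
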